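/- Let f be nonconstant analytic on an open set containing the closed unit disk with |f| = 1 on the unit circle and f' ≠ 0 on the unit circle. Then as z traverses the unit circle once with positive orientation, arg(f(z)) is strictly increasing; equivalently, for z on the unit circle, the quantity Re(z·f'(z)/f(z)) > 0. -/

import Mathlib

open Set Metric

lemma deriv_le_zero_of_nonneg_left {v : ℝ → ℝ} {d : ℝ}
    (hv : HasDerivAt v d 1) (h0 : v 1 = 0)
    (hpos : ∀ t ∈ Ioo (1/2 : ℝ) 1, 0 ≤ v t) : d ≤ 0 := by
  have h := hasDerivAt_iff_tendsto_slope.mp hv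
  have h2 : Filter.Tendsto (slope v 1) (nhdsWithin 1 (Iio 1)) (nhds d) :=
    h.mono_left (nhdsWithin_mono _ (fun x hx => ne_of_lt hx))
  refine le_of_tendsto h2 ?_
  filter_upwards [Ioo_mem_nhdsLT_of_mem (by norm_num : (1:ℝ) ∈ Ioc (1/2) 1)] with t ht
  have : slope v 1 t = v t / (t - 1) := by
    simp [slope_def_field, h0, div_eq_mul_inv]
  rw [this]
  exact div_nonpos_iff.mpr (Or.inl ⟨hpos t ht, by linarith [ht.2]⟩)

theorem arg_strictly_increasing_on_circle (f : ℂ → ℂ) (U : Set ℂ) (hU : IsOpen U)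
    (hcl : closure (ball (0 : ℂ) 1) ⊆ U) (hf : AnalyticOnNhd ℂ f U)
    (hnc : ¬ ∃ c : ℂ, Set.EqOn f (fun _ => c) (closure (ball (0 : ℂ) 1)))
    (hmod : ∀ z : ℂ, ‖z‖ = 1 → ‖f z‖ = 1)
    (hder : ∀ z : ℂ, ‖z‖ = 1 → deriv f z ≠ 0) :
    ∀ z : ℂ, ‖z‖ = 1 → 0 < (z * deriv f z / f z).re := by
  have hclb : closure (ball (0 : ℂ) 1) = closedBall 0 1 := closure_ball 0 one_ne_zero
  rw [hclb] at hcl hnc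
  -- differentiability
  have hdiff : DifferentiableOn ℂ f (closedBall (0:ℂ) 1) :=
    fun w hw => (hf w (hcl hw)).differentiableAt.differentiableWithinAt
  have hdcc : DiffContOnCl ℂ f (ball (0:ℂ) 1) := by
    rw [← hclb] at hdiff; exact hdiff.diffContOnCl
  -- Step A : ‖f‖ ≤ 1 on closed ball
  have hle : ∀ w ∈ closedBall (0:ℂ) 1, ‖f w‖ ≤ 1 := by
    intro w hw
    refine Complex.norm_le_of_forall_mem_frontier_norm_le isBounded_ball hdcc ?_ ?_
    · intro x hx
      rw [frontier_ball 0 one_ne_zero, mem_sphere_zero_iff_norm] at hx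
      exact (hmod x hx).le
    · rwa [hclb]
  -- Step B : ‖f‖ < 1 on open ball
  have hlt : ∀ w ∈ ball (0:ℂ) 1, ‖f w‖ < 1 := by
    intro w hw
    rcases lt_or_eq_of_le (hle w (ball_subset_closedBall hw)) with h | h
    · exact h
    exfalso
    have hmax : IsMaxOn (norm ∘ f) (ball (0:ℂ) 1) w := by
      intro x hx
      simp only [Function.comp_apply]
      rw [h]
      exact hle x (ball_subset_closedBall hx)
    have heq := Complex.eqOn_closure_of_isPreconnected_of_isMaxOn_norm
      (convex_ball (0:ℂ) 1).isPreconnected isOpen_ball hdcc hw hmax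
    rw [hclb] at heq
    exact hnc ⟨f w, heq⟩
  -- Step C : max on inner sphere < 1
  obtain ⟨x₀, hx₀, hx₀max⟩ : ∃ x₀ ∈ sphere (0:ℂ) (1/2), IsMaxOn (fun w => ‖f w‖) (sphere (0:ℂ) (1/2)) x₀ := by
    apply (isCompact_sphere (0:ℂ) (1/2)).exists_isMaxOn
    · exact (NormedSpace.sphere_nonempty.mpr (by norm_num))
    · refine continuous_norm.comp_continuousOn ((hdiff.continuousOn).mono (fun x hx => ?_))
      rw [mem_sphere_zero_iff_norm] at hx
      rw [mem_closedBall_zero_iff, hx]; norm_num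
  set M : ℝ := max ‖f x₀‖ (1/2) with hM
  have hM0 : 0 < M := lt_of_lt_of_le (by norm_num) (le_max_right _ _)
  have hM1 : M < 1 := by
    apply max_lt ?_ (by norm_num)
    apply hlt
    rw [mem_sphere_zero_iff_norm] at hx₀
    rw [mem_ball_zero_iff, hx₀]; norm_num
  -- Step D : q with M^q ≤ 1/2
  obtain ⟨q, hq⟩ := exists_pow_lt_of_lt_one (by norm_num : (0:ℝ) < 1/2) hM1
  have hq0 : q ≠ 0 := by
    rintro rfl; simp at hq; linarith
  -- Step E : key annulus bound
  set A : Set ℂ := ball (0:ℂ) 1 \ closedBall 0 (1/2) with hA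
  have hAopen : IsOpen A := isOpen_ball.sdiff isClosed_closedBall
  have hAsub : closure A ⊆ closedBall (0:ℂ) 1 \ ball 0 (1/2) := by
    apply closure_minimal (diff_subset_diff ball_subset_closedBall ball_subset_closedBall)
    rw [diff_eq]
    exact isClosed_closedBall.inter (isClosed_compl_iff.mpr isOpen_ball)
  have hnorm : ∀ w ∈ closure A, 1/2 ≤ ‖w‖ ∧ ‖w‖ ≤ 1 := by
    intro w hw
    have h := hAsub hw
    rw [mem_diff, mem_closedBall_zero_iff, mem_ball_zero_iff, not_lt] at h
    exact ⟨h.2, h.1⟩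
  have hA0 : ∀ w ∈ closure A, w ≠ 0 := by
    intro w hw h0
    have := (hnorm w hw).1
    rw [h0] at this; norm_num at this
  have key : ∀ w ∈ closure A, ‖f w‖ ^ q ≤ ‖w‖ := by
    have hb : ∀ w ∈ closure A, ‖(fun x : ℂ => f x ^ q / x) w‖ ≤ 1 := by
      intro w hw
      refine Complex.norm_le_of_forall_mem_frontier_norm_le (f := fun x : ℂ => f x ^ q / x)
        (isBounded_ball.subset diff_subset) ?_ ?_ hw
      · apply DifferentiableOn.diffContOnCl
        intro x hx
        refine DifferentiableWithinAt.div ?_ differentiableWithinAt_id (hA0 x hx)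
        exact ((hf x (hcl (hAsub hx).1)).differentiableAt.pow q).differentiableWithinAt
      · intro x hx
        have hxc : x ∈ closure A := frontier_subset_closure hx
        have hxA : x ∉ A := by
          intro hxA
          exact hx.2 (by rwa [hAopen.interior_eq])
        have hn := hnorm x hxc
        rw [hA, mem_diff, mem_ball_zero_iff, mem_closedBall_zero_iff, not_and_or, not_lt, not_not] at hxA
        simp only [norm_div, norm_pow]
        rcases hxA with h | h
        · have hx1 : ‖x‖ = 1 := le_antisymm hn.2 h
          rw [hmod x hx1, hx1]; norm_num
        · have hx1 : ‖x‖ = 1/2 := le_antisymm h hn.1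
          rw [hx1, div_le_one (by norm_num)]
          have h1 : ‖f x‖ ≤ M := le_trans (hx₀max (mem_sphere_zero_iff_norm.mpr hx1)) (le_max_left _ _)
          have h2 : ‖f x‖ ^ q ≤ M ^ q := pow_le_pow_left₀ (norm_nonneg _) h1 q
          linarith
    intro w hw
    have := hb w hw
    simp only [norm_div, norm_pow] at this
    rwa [div_le_one (norm_pos_iff.mpr (hA0 w hw))] at this
  intro z hz
  have hzU : z ∈ closedBall (0:ℂ) 1 := by rw [mem_closedBall_zero_iff, hz]
  have hfz1 : ‖f z‖ = 1 := hmod z hz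
  have hfz0 : f z ≠ 0 := by
    intro h; rw [h] at hfz1; simp at hfz1
  -- the path t ↦ f (t z) and its derivative at t = 1
  have hfd : HasDerivAt f (deriv f z) z := (hf z (hcl hzU)).differentiableAt.hasDerivAt
  have hψ : HasDerivAt (fun t : ℝ => (t : ℂ) * z) z 1 := by
    simpa using (Complex.ofRealCLM.hasDerivAt (x := (1:ℝ))).mul_const z
  have hφ : HasDerivAt (fun t : ℝ => f ((t : ℂ) * z)) (z * deriv f z) 1 := by
    have hfd' : HasFDerivAt f ((ContinuousLinearMap.smulRight (1 : ℂ →L[ℂ] ℂ) (deriv f z)).restrictScalars ℝ) (((1:ℝ):ℂ) * z) := by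
      rw [Complex.ofReal_one, one_mul]; exact hfd.hasFDerivAt.restrictScalars ℝ
    have := hfd'.comp_hasDerivAt 1 hψ
    exact this.congr_deriv (by simp [smul_eq_mul])
  -- u t = ‖f (t z)‖ ^ 2
  have hu : HasDerivAt (fun t : ℝ => ‖f ((t : ℂ) * z)‖ ^ 2)
      (2 * inner ℝ (f z) (z * deriv f z)) 1 := by
    have := hφ.norm_sq
    simpa using this
  set I : ℝ := inner ℝ (f z) (z * deriv f z) with hI
  -- v t = t ^ 2 - (u t) ^ q, nonneg on (1/2, 1), zero at 1
  have hv : HasDerivAt (fun t : ℝ => t ^ 2 - (‖f ((t : ℂ) * z)‖ ^ 2) ^ q)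
      (2 - q * (2 * I)) 1 := by
    have h1 : HasDerivAt (fun t : ℝ => t ^ 2) 2 1 := by
      simpa using hasDerivAt_pow 2 (1 : ℝ)
    have h2 := hu.pow q
    have h2' : HasDerivAt (fun t : ℝ => (‖f ((t : ℂ) * z)‖ ^ 2) ^ q) ((q : ℝ) * (2 * I)) 1 := by
      exact h2.congr_deriv (by simp [hfz1])
    exact h1.sub h2'
  have hv0 : (fun t : ℝ => t ^ 2 - (‖f ((t : ℂ) * z)‖ ^ 2) ^ q) 1 = 0 := by
    simp [hfz1]
  have hvpos : ∀ t ∈ Ioo (1/2 : ℝ) 1, 0 ≤ t ^ 2 - (‖f ((t : ℂ) * z)‖ ^ 2) ^ q := by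
    intro t ht
    have ht0 : (0:ℝ) < t := lt_trans (by norm_num) ht.1
    have htz : (t : ℂ) * z ∈ closure A := by
      apply subset_closure
      rw [hA, mem_diff, mem_ball_zero_iff, mem_closedBall_zero_iff]
      have : ‖(t : ℂ) * z‖ = t := by
        rw [norm_mul, hz, Complex.norm_real, Real.norm_eq_abs, abs_of_pos ht0, mul_one]
      rw [this]
      exact ⟨ht.2, by linarith [ht.1]⟩
    have hk := key _ htz
    have hwn : ‖(t : ℂ) * z‖ = t := by
      rw [norm_mul, hz, Complex.norm_real, Real.norm_eq_abs, abs_of_pos ht0, mul_one]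
    rw [hwn] at hk
    have h1 : (‖f ((t : ℂ) * z)‖ ^ q) ^ 2 ≤ t ^ 2 :=
      pow_le_pow_left₀ (pow_nonneg (norm_nonneg _) q) hk 2
    have h2 : (‖f ((t : ℂ) * z)‖ ^ 2) ^ q = (‖f ((t : ℂ) * z)‖ ^ q) ^ 2 := by
      rw [← pow_mul, ← pow_mul, Nat.mul_comm]
    linarith
  have hd := deriv_le_zero_of_nonneg_left hv hv0 hvpos
  have hq1 : (1:ℝ) ≤ q := by exact_mod_cast Nat.one_le_iff_ne_zero.mpr hq0
  have hIpos : 0 < I := by nlinarith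
  -- identify I with the real part
  have : (z * deriv f z / f z).re = I := by
    rw [hI, real_inner_eq_re_inner ℂ]
    rw [div_eq_mul_inv, Complex.inv_def]
    have hns : Complex.normSq (f z) = 1 := by
      rw [Complex.normSq_eq_norm_sq, hfz1]; norm_num
    rw [hns]
    simp [RCLike.inner_apply, mul_comm]
  rw [this]
  exact hIpos
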